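/- Algebraic lemma in the final step of the Li–Yau gradient estimate (step (V) of the proof of Theorem 4.3, following Davies): Let N > 0, θ > 1, K' ≤ 0, s > 0 be real numbers, and let x ≥ 0 and y be real numbers. Set α := s·(x − θy). If α > 0 and α ≥ 2s²·( (x − y)²/N + K'·x ), then α ≤ (N·θ²/2)·( 1 − K'·s/(2(θ−1)) ). -/

import Mathlib

/-- Homogeneous core inequality for the Li–Yau algebraic lemma. -/
lemma liyau_core (m a k ξ : ℝ) (hm : 0 < m) (ha : 0 < a) (hk : k ≤ 0) (hξ : 0 ≤ ξ)
    (h : (ξ + a) ^ 2 + 2 * k * ξ * m ≤ a * m) : a ≤ m - k * m / 2 := by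
  by_cases hcase : 0 ≤ a + k * m
  · -- min at ξ = 0 : a² ≤ a m
    nlinarith [sq_nonneg ξ, mul_nonneg hξ hcase, mul_nonpos_of_nonpos_of_nonneg hk hm.le]
  · push_neg at hcase
    have hB : a * (1 + 2 * k) ≥ -(k ^ 2) * m := by
      nlinarith [sq_nonneg (ξ + a + k * m)]
    by_cases hk2 : -2 ≤ k
    · -- a < -k*m ≤ m(1 - k/2)
      nlinarith [hcase, hm.le]
    · push_neg at hk2
      have h12 : 1 + 2 * k < 0 := by linarith
      nlinarith [hB, mul_pos hm (show (0:ℝ) < -(1 + 2*k) by linarith),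
        mul_nonneg (mul_nonneg hm.le (sq_nonneg k)) (show (0:ℝ) ≤ -(2/3) - k by linarith)]
  
/-- The algebraic lemma in the final step of the Li–Yau gradient estimate. -/
theorem liyau_algebraic_lemma (N θ K' s x y : ℝ)
    (hN : 0 < N) (hθ : 1 < θ) (hK : K' ≤ 0) (hs : 0 < s) (hx : 0 ≤ x)
    (α : ℝ) (hα : α = s * (x - θ * y)) (hαpos : 0 < α)
    (hineq : 2 * s ^ 2 * ((x - y) ^ 2 / N + K' * x) ≤ α) :
    α ≤ N * θ ^ 2 / 2 * (1 - K' * s / (2 * (θ - 1))) := by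
  have hθ1 : 0 < θ - 1 := by linarith
  have hθ0 : 0 < θ := by linarith
  have hm : 0 < N * θ ^ 2 / 2 := by positivity
  -- eliminate y :  s*θ*(x - y) = s*(θ-1)*x + α
  have hxy : s * θ * (x - y) = s * (θ - 1) * x + α := by
    rw [hα]; ring
  -- clear the division by N in hineq
  have hdiv : N * ((x - y) ^ 2 / N) = (x - y) ^ 2 := mul_div_cancel₀ _ hN.ne'
  have hNineq : 2 * s ^ 2 * (x - y) ^ 2 + 2 * s ^ 2 * (K' * x) * N ≤ N * α := by
    have := mul_le_mul_of_nonneg_left hineq hN.le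
    nlinarith [this, hdiv]
  -- the key hypothesis in homogeneous form
  have H : (s * (θ - 1) * x + α) ^ 2 + 2 * (s * K' / (θ - 1)) * (s * (θ - 1) * x) * (N * θ ^ 2 / 2)
      ≤ α * (N * θ ^ 2 / 2) := by
    have hsq : (s * (θ - 1) * x + α) ^ 2 = s ^ 2 * θ ^ 2 * (x - y) ^ 2 := by
      rw [← hxy]; ring
    have hk' : 2 * (s * K' / (θ - 1)) * (s * (θ - 1) * x) * (N * θ ^ 2 / 2)
        = s ^ 2 * K' * x * N * θ ^ 2 := by
      field_simp
    rw [hsq, hk']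
    nlinarith [mul_le_mul_of_nonneg_left hNineq (show (0:ℝ) ≤ θ^2/2 by positivity)]
  have hk : s * K' / (θ - 1) ≤ 0 :=
    div_nonpos_of_nonpos_of_nonneg (mul_nonpos_of_nonneg_of_nonpos hs.le hK) hθ1.le
  have hξ : 0 ≤ s * (θ - 1) * x := by positivity
  have := liyau_core (N * θ ^ 2 / 2) α (s * K' / (θ - 1)) (s * (θ - 1) * x)
    hm hαpos hk hξ H
  calc α ≤ N * θ ^ 2 / 2 - (s * K' / (θ - 1)) * (N * θ ^ 2 / 2) / 2 := this
    _ = N * θ ^ 2 / 2 * (1 - K' * s / (2 * (θ - 1))) := by field_simp
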